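/- Under the two-component Gaussian mixture model x ∼ α_1 N_p(μ_1, Σ) + α_2 N_p(μ_2, Σ) with α_1 + α_2 = 1, α_1, α_2 > 0, α_1 ≠ 1/2, μ_1 ≠ μ_2, Σ positive definite: the squared skewness u ↦ γ(u)^2 over unit vectors u, where γ(u) = E[(u'(x − Ex))^3]/(E[(u'(x − Ex))^2])^{3/2}, is uniquely maximized at u = ± θ/‖θ‖, where θ = Σ^{-1}(μ_2 − μ_1). If instead α_1 = 1/2, then γ(u)^2 = 0 for all unit vectors u. -/

import Mathlib

open MeasureTheory ProbabilityTheory Matrix Real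

noncomputable def stdPDF : ℝ → ℝ := gaussianPDFReal 0 1

lemma stdPDF_eq (x : ℝ) : stdPDF x = (√(2 * π))⁻¹ * rexp (-(1/2) * x ^ 2) := by
  simp only [stdPDF, gaussianPDFReal, NNReal.coe_one, mul_one, sub_zero]
  ring_nf

lemma integrable_pow_mul_expStd (n : ℕ) :
    Integrable (fun x : ℝ => x ^ n * rexp (-(1/2) * x ^ 2)) := by
  have := integrable_rpow_mul_exp_neg_mul_sq (b := 1/2) (by norm_num) (s := (n : ℝ))
    (lt_of_lt_of_le neg_one_lt_zero (Nat.cast_nonneg n))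
  simpa [Real.rpow_natCast] using this

lemma integrable_pow_gaussian (n : ℕ) :
    Integrable (fun x : ℝ => x ^ n) (gaussianReal 0 1) := by
  rw [gaussianReal_of_var_ne_zero 0 one_ne_zero,
    integrable_withDensity_iff (measurable_gaussianPDF 0 1)
      (by filter_upwards with x; exact ENNReal.ofReal_lt_top)]
  have : Integrable (fun x : ℝ => (x ^ n * rexp (-(1/2) * x ^ 2)) * (√(2 * π))⁻¹) :=
    (integrable_pow_mul_expStd n).mul_const _
  apply this.congr
  filter_upwards with x
  have hx : (gaussianPDF 0 1 x).toReal = stdPDF x :=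
    ENNReal.toReal_ofReal (gaussianPDFReal_nonneg 0 1 x)
  rw [hx, stdPDF_eq]; ring

lemma integral_gaussian_eq_density (g : ℝ → ℝ) :
    ∫ x, g x ∂gaussianReal 0 1 = ∫ x, stdPDF x * g x := by
  rw [gaussianReal_of_var_ne_zero 0 one_ne_zero]
  have h : (gaussianPDF 0 1) = fun x => ((Real.toNNReal (stdPDF x) : NNReal) : ENNReal) := rfl
  rw [h, integral_withDensity_eq_integral_smul (f := fun x => (stdPDF x).toNNReal)
    ((measurable_gaussianPDFReal 0 1).real_toNNReal) g]
  congr 1; funext x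
  rw [NNReal.smul_def, Real.coe_toNNReal (stdPDF x) (gaussianPDFReal_nonneg 0 1 x)]
  rfl

lemma gaussian_neg_invariant :
    MeasurePreserving (fun x : ℝ => -x) (gaussianReal 0 1) (gaussianReal 0 1) := by
  refine ⟨measurable_neg, ?_⟩
  have := gaussianReal_map_const_mul (μ := 0) (v := 1) (-1)
  have h2 : (fun x : ℝ => -1 * x) = fun x : ℝ => -x := by funext x; ring
  rw [h2] at this
  rw [this]
  norm_num

lemma integral_odd_eq_zero {E : Type*} [NormedAddCommGroup E] [MeasurableSpace E]
    [BorelSpace E] {F : Type*} [NormedAddCommGroup F] [NormedSpace ℝ F]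
    (ν : Measure E) (hν : MeasurePreserving (fun x : E => -x) ν ν)
    {f : E → F} (hf : ∀ x, f (-x) = -f x) : ∫ x, f x ∂ν = 0 := by
  have h1 : ∫ x, f (-x) ∂ν = ∫ x, f x ∂ν :=
    hν.integral_comp (Homeomorph.neg E).measurableEmbedding f
  have h2 : ∫ x, f (-x) ∂ν = -∫ x, f x ∂ν := by
    simp only [hf]; exact integral_neg f
  have h3 : ∫ x, f x ∂ν = -∫ x, f x ∂ν := by rw [← h2, h1]
  have h4 : (∫ x, f x ∂ν) + ∫ x, f x ∂ν = 0 := by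
    nth_rewrite 1 [h3]; exact neg_add_cancel _
  have h5 : (2 : ℝ) • ∫ x, f x ∂ν = 0 := by rw [two_smul]; exact h4
  rcases smul_eq_zero.mp h5 with h | h
  · norm_num at h
  · exact h

lemma integral_id_gaussian : ∫ x, x ∂gaussianReal 0 1 = 0 :=
  integral_odd_eq_zero _ gaussian_neg_invariant (fun x => rfl)

lemma integral_sq_gaussian : ∫ x, x ^ 2 ∂gaussianReal 0 1 = 1 := by
  rw [integral_gaussian_eq_density]
  have hderiv : ∀ x : ℝ, HasDerivAt (fun y : ℝ => -rexp (-(1/2) * y ^ 2))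
      (x * rexp (-(1/2) * x ^ 2)) x := by
    intro x
    have h1 : HasDerivAt (fun y : ℝ => -(1/2) * y ^ 2) (-(1/2) * (2 * x)) x :=
      ((hasDerivAt_pow 2 x).const_mul _).congr_deriv (by ring)
    have := (h1.exp).fun_neg
    refine this.congr_deriv ?_
    ring
  have huv' : Integrable (fun x : ℝ => x * (x * rexp (-(1/2) * x ^ 2))) := by
    have := integrable_pow_mul_expStd 2
    apply this.congr
    filter_upwards with x; ring
  have hu'v : Integrable (fun x : ℝ => (1 : ℝ) * -rexp (-(1/2) * x ^ 2)) := by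
    have := (integrable_pow_mul_expStd 0).neg
    apply this.congr
    filter_upwards with x; simp only [Pi.neg_apply]; ring_nf
  have huv : Integrable (fun x : ℝ => x * -rexp (-(1/2) * x ^ 2)) := by
    have := (integrable_pow_mul_expStd 1).neg
    apply this.congr
    filter_upwards with x; simp only [Pi.neg_apply]; ring_nf
  have hIBP := integral_mul_deriv_eq_deriv_mul_of_integrable
    (u := fun x : ℝ => x) (u' := fun _ => (1 : ℝ))
    (v := fun y : ℝ => -rexp (-(1/2) * y ^ 2))
    (v' := fun x => x * rexp (-(1/2) * x ^ 2))
    (fun x _ => hasDerivAt_id x) (fun x _ => hderiv x) huv' hu'v huv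
  -- hIBP : ∫ x * (x * exp ...) = - ∫ 1 * (-exp ...)
  have hgauss : ∫ x : ℝ, rexp (-(1/2) * x ^ 2) = √(2 * π) := by
    have := integral_gaussian (1/2)
    rw [this]
    congr 1
    rw [div_div_eq_mul_div, div_one]
    ring
  have h2 : ∫ x : ℝ, x * (x * rexp (-(1/2) * x ^ 2)) = √(2 * π) := by
    rw [hIBP, ← hgauss]
    rw [← integral_neg]
    congr 1; funext x; ring
  have hfin : ∫ x : ℝ, stdPDF x * x ^ 2
      = (√(2 * π))⁻¹ * ∫ x : ℝ, x * (x * rexp (-(1/2) * x ^ 2)) := by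
    rw [← integral_const_mul]
    congr 1; funext x
    rw [stdPDF_eq]; ring
  rw [hfin, h2, inv_mul_cancel₀]
  positivity


section PiGauss

variable {p : ℕ}

lemma pi_neg_invariant : MeasurePreserving (fun w : Fin p → ℝ => -w)
    (Measure.pi fun _ => gaussianReal 0 1) (Measure.pi fun _ => gaussianReal 0 1) :=
  measurePreserving_pi (fun _ : Fin p => gaussianReal 0 1)
      (fun _ => gaussianReal 0 1) (fun _ => gaussian_neg_invariant)

lemma mono_integrable (e : Fin p → ℕ) :
    Integrable (fun w : Fin p → ℝ => ∏ i, (w i) ^ (e i))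
      (Measure.pi fun _ => gaussianReal 0 1) := by
  letI : MeasureSpace ℝ := ⟨gaussianReal 0 1⟩
  haveI : SigmaFinite (volume : Measure ℝ) :=
    inferInstanceAs (SigmaFinite (gaussianReal 0 1))
  exact Integrable.fintype_prod (f := fun i (x : ℝ) => x ^ e i)
    (fun i => integrable_pow_gaussian (e i))

lemma mono_integral (e : Fin p → ℕ) :
    ∫ w, ∏ i, (w i) ^ (e i) ∂(Measure.pi fun _ => gaussianReal 0 1)
      = ∏ i, ∫ x, x ^ (e i) ∂gaussianReal 0 1 := by
  letI : MeasureSpace ℝ := ⟨gaussianReal 0 1⟩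
  haveI : SigmaFinite (volume : Measure ℝ) :=
    inferInstanceAs (SigmaFinite (gaussianReal 0 1))
  exact integral_fintype_prod_eq_prod (fun i (x : ℝ) => x ^ e i)

lemma prod_pow_indicator (w : Fin p → ℝ) (i : Fin p) :
    ∏ k, (w k) ^ (if k = i then 1 else 0) = w i := by
  have : ∀ k : Fin p, (w k) ^ (if k = i then 1 else 0) = if k = i then w k else 1 := by
    intro k; split <;> simp
  simp only [this]
  simp [Finset.prod_ite_eq']

lemma prod_pow_add (w : Fin p → ℝ) (e f : Fin p → ℕ) :
    ∏ k, (w k) ^ (e k + f k) = (∏ k, (w k) ^ (e k)) * ∏ k, (w k) ^ (f k) := by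
  rw [← Finset.prod_mul_distrib]
  exact Finset.prod_congr rfl (fun k _ => pow_add _ _ _)

lemma eval_integrable (i : Fin p) :
    Integrable (fun w : Fin p → ℝ => w i) (Measure.pi fun _ => gaussianReal 0 1) := by
  have := mono_integrable (fun k => if k = i then 1 else 0)
  apply this.congr
  filter_upwards with w
  exact prod_pow_indicator w i

lemma pair_integrable (i j : Fin p) :
    Integrable (fun w : Fin p → ℝ => w i * w j) (Measure.pi fun _ => gaussianReal 0 1) := by
  have := mono_integrable (fun k => (if k = i then 1 else 0) + (if k = j then 1 else 0))
  apply this.congr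
  filter_upwards with w
  rw [prod_pow_add, prod_pow_indicator, prod_pow_indicator]

lemma triple_integrable (i j l : Fin p) :
    Integrable (fun w : Fin p → ℝ => w i * w j * w l)
      (Measure.pi fun _ => gaussianReal 0 1) := by
  have := mono_integrable
    (fun k => ((if k = i then 1 else 0) + (if k = j then 1 else 0)) + (if k = l then 1 else 0))
  apply this.congr
  filter_upwards with w
  rw [prod_pow_add, prod_pow_add, prod_pow_indicator, prod_pow_indicator, prod_pow_indicator]

lemma pair_integral (i j : Fin p) :
    ∫ w, w i * w j ∂(Measure.pi fun _ => gaussianReal 0 1) = if i = j then 1 else 0 := by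
  have key : ∫ w, w i * w j ∂(Measure.pi fun _ => gaussianReal 0 1)
      = ∏ k, ∫ x, x ^ ((if k = i then 1 else 0) + (if k = j then 1 else 0)) ∂gaussianReal 0 1 := by
    rw [← mono_integral]
    congr 1; funext w
    rw [prod_pow_add, prod_pow_indicator, prod_pow_indicator]
  rw [key]
  by_cases hij : i = j
  · subst hij
    rw [if_pos rfl]
    have : ∀ k : Fin p, ∫ x, x ^ ((if k = i then 1 else 0) + (if k = i then 1 else 0))
        ∂gaussianReal 0 1 = 1 := by
      intro k
      split
      · simpa using integral_sq_gaussian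
      · simp
    simp [this]
  · rw [if_neg hij]
    apply Finset.prod_eq_zero (Finset.mem_univ i)
    rw [if_pos rfl, if_neg (fun h => hij h)]
    simpa using integral_id_gaussian

end PiGauss

section DotGauss

variable {p : ℕ} (v : Fin p → ℝ)

lemma dot_integrable :
    Integrable (fun w : Fin p → ℝ => v ⬝ᵥ w) (Measure.pi fun _ => gaussianReal 0 1) := by
  have : Integrable (fun w : Fin p → ℝ => ∑ i, v i * w i)
      (Measure.pi fun _ => gaussianReal 0 1) :=
    integrable_finset_sum _ (fun i _ => (eval_integrable i).const_mul (v i))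
  exact this.congr (by filter_upwards with w; rw [dotProduct])

lemma dot_sq_eq (w : Fin p → ℝ) : (v ⬝ᵥ w) ^ 2 = ∑ i, ∑ j, (v i * v j) * (w i * w j) := by
  rw [dotProduct, sq, Finset.sum_mul_sum]
  apply Finset.sum_congr rfl; intro i _
  apply Finset.sum_congr rfl; intro j _
  ring

lemma dot_cube_eq (w : Fin p → ℝ) :
    (v ⬝ᵥ w) ^ 3 = ∑ i, ∑ j, ∑ l, (v i * v j * v l) * (w i * w j * w l) := by
  rw [show (v ⬝ᵥ w) ^ 3 = (v ⬝ᵥ w) ^ 2 * (v ⬝ᵥ w) from by ring, dot_sq_eq, dotProduct,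
    Finset.sum_mul]
  refine Finset.sum_congr rfl fun i _ => ?_
  rw [Finset.sum_mul]
  refine Finset.sum_congr rfl fun j _ => ?_
  rw [Finset.mul_sum]
  refine Finset.sum_congr rfl fun l _ => ?_
  ring

lemma dot_sq_integrable :
    Integrable (fun w : Fin p → ℝ => (v ⬝ᵥ w) ^ 2) (Measure.pi fun _ => gaussianReal 0 1) := by
  have : Integrable (fun w : Fin p → ℝ => ∑ i, ∑ j, (v i * v j) * (w i * w j))
      (Measure.pi fun _ => gaussianReal 0 1) :=
    integrable_finset_sum _ (fun i _ => integrable_finset_sum _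
      (fun j _ => (pair_integrable i j).const_mul _))
  exact this.congr (by filter_upwards with w; rw [dot_sq_eq])

lemma dot_cube_integrable :
    Integrable (fun w : Fin p → ℝ => (v ⬝ᵥ w) ^ 3) (Measure.pi fun _ => gaussianReal 0 1) := by
  have : Integrable (fun w : Fin p → ℝ => ∑ i, ∑ j, ∑ l, (v i * v j * v l) * (w i * w j * w l))
      (Measure.pi fun _ => gaussianReal 0 1) :=
    integrable_finset_sum _ (fun i _ => integrable_finset_sum _
      (fun j _ => integrable_finset_sum _ (fun l _ => (triple_integrable i j l).const_mul _)))
  exact this.congr (by filter_upwards with w; rw [dot_cube_eq])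

lemma dot_integral : ∫ w, v ⬝ᵥ w ∂(Measure.pi fun _ => gaussianReal 0 1) = 0 :=
  integral_odd_eq_zero _ pi_neg_invariant (fun w => by rw [dotProduct_neg])

lemma dot_cube_integral :
    ∫ w, (v ⬝ᵥ w) ^ 3 ∂(Measure.pi fun _ => gaussianReal 0 1) = 0 :=
  integral_odd_eq_zero _ pi_neg_invariant (fun w => by rw [dotProduct_neg]; ring)

lemma dot_sq_integral :
    ∫ w, (v ⬝ᵥ w) ^ 2 ∂(Measure.pi fun _ => gaussianReal 0 1) = v ⬝ᵥ v := by
  have h1 : ∫ w, (v ⬝ᵥ w) ^ 2 ∂(Measure.pi fun _ => gaussianReal 0 1)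
      = ∑ i, ∑ j, ∫ w, (v i * v j) * (w i * w j) ∂(Measure.pi fun _ => gaussianReal 0 1) := by
    rw [show (fun w : Fin p → ℝ => (v ⬝ᵥ w) ^ 2)
        = fun w => ∑ i, ∑ j, (v i * v j) * (w i * w j) from funext (dot_sq_eq v)]
    rw [integral_finset_sum _ (fun i _ => integrable_finset_sum _
      (fun j _ => (pair_integrable i j).const_mul _))]
    exact Finset.sum_congr rfl (fun i _ => integral_finset_sum _
      (fun j _ => (pair_integrable i j).const_mul _))
  rw [h1]
  have h2 : ∀ i j : Fin p, ∫ w, (v i * v j) * (w i * w j)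
      ∂(Measure.pi fun _ => gaussianReal 0 1) = (v i * v j) * if i = j then 1 else 0 := by
    intro i j
    rw [integral_const_mul, pair_integral]
  simp only [h2, mul_ite, mul_one, mul_zero]
  rw [dotProduct]
  refine Finset.sum_congr rfl fun i _ => ?_
  rw [Finset.sum_ite_eq]
  simp

variable (c : ℝ)

lemma shift_sq_integrable :
    Integrable (fun w : Fin p → ℝ => (c + v ⬝ᵥ w) ^ 2)
      (Measure.pi fun _ => gaussianReal 0 1) := by
  have : Integrable (fun w : Fin p → ℝ => c ^ 2 + (2 * c * (v ⬝ᵥ w) + (v ⬝ᵥ w) ^ 2))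
      (Measure.pi fun _ => gaussianReal 0 1) :=
    (integrable_const _).add (((dot_integrable v).const_mul _).add (dot_sq_integrable v))
  exact this.congr (by filter_upwards with w; ring)

lemma shift_cube_integrable :
    Integrable (fun w : Fin p → ℝ => (c + v ⬝ᵥ w) ^ 3)
      (Measure.pi fun _ => gaussianReal 0 1) := by
  have : Integrable (fun w : Fin p → ℝ =>
      (c ^ 3 + (3 * c ^ 2 * (v ⬝ᵥ w) + (3 * c * (v ⬝ᵥ w) ^ 2 + (v ⬝ᵥ w) ^ 3))))
      (Measure.pi fun _ => gaussianReal 0 1) :=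
    (integrable_const _).add (((dot_integrable v).const_mul _).add
      (((dot_sq_integrable v).const_mul _).add (dot_cube_integrable v)))
  exact this.congr (by filter_upwards with w; ring)

lemma shift_sq_integral :
    ∫ w, (c + v ⬝ᵥ w) ^ 2 ∂(Measure.pi fun _ => gaussianReal 0 1) = c ^ 2 + v ⬝ᵥ v := by
  have hg : Integrable (fun w : Fin p → ℝ => 2 * c * (v ⬝ᵥ w) + (v ⬝ᵥ w) ^ 2)
      (Measure.pi fun _ : Fin p => gaussianReal 0 1) :=
    ((dot_integrable v).const_mul _).add (dot_sq_integrable v)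
  have ha : Integrable (fun w : Fin p → ℝ => 2 * c * (v ⬝ᵥ w))
      (Measure.pi fun _ : Fin p => gaussianReal 0 1) := (dot_integrable v).const_mul _
  rw [show (fun w : Fin p → ℝ => (c + v ⬝ᵥ w) ^ 2)
      = fun w => c ^ 2 + (2 * c * (v ⬝ᵥ w) + (v ⬝ᵥ w) ^ 2) from funext (fun w => by ring)]
  rw [integral_add (integrable_const _) hg, integral_add ha (dot_sq_integrable v),
    integral_const_mul, dot_integral, dot_sq_integral, integral_const]
  simp

lemma shift_cube_integral :
    ∫ w, (c + v ⬝ᵥ w) ^ 3 ∂(Measure.pi fun _ => gaussianReal 0 1)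
      = c ^ 3 + 3 * c * (v ⬝ᵥ v) := by
  have hb : Integrable (fun w : Fin p → ℝ => 3 * c * (v ⬝ᵥ w) ^ 2 + (v ⬝ᵥ w) ^ 3)
      (Measure.pi fun _ : Fin p => gaussianReal 0 1) :=
    ((dot_sq_integrable v).const_mul _).add (dot_cube_integrable v)
  have hg : Integrable (fun w : Fin p → ℝ =>
      3 * c ^ 2 * (v ⬝ᵥ w) + (3 * c * (v ⬝ᵥ w) ^ 2 + (v ⬝ᵥ w) ^ 3))
      (Measure.pi fun _ : Fin p => gaussianReal 0 1) :=
    ((dot_integrable v).const_mul _).add hb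
  have ha : Integrable (fun w : Fin p → ℝ => 3 * c ^ 2 * (v ⬝ᵥ w))
      (Measure.pi fun _ : Fin p => gaussianReal 0 1) := (dot_integrable v).const_mul _
  have hc : Integrable (fun w : Fin p → ℝ => 3 * c * (v ⬝ᵥ w) ^ 2)
      (Measure.pi fun _ : Fin p => gaussianReal 0 1) := (dot_sq_integrable v).const_mul _
  rw [show (fun w : Fin p → ℝ => (c + v ⬝ᵥ w) ^ 3)
      = fun w => c ^ 3 + (3 * c ^ 2 * (v ⬝ᵥ w) + (3 * c * (v ⬝ᵥ w) ^ 2 + (v ⬝ᵥ w) ^ 3))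
      from funext (fun w => by ring)]
  rw [integral_add (integrable_const _) hg, integral_add ha hb,
    integral_add hc (dot_cube_integrable v),
    integral_const_mul, integral_const_mul, dot_integral, dot_sq_integral,
    dot_cube_integral, integral_const]
  simp

end DotGauss

noncomputable def mvGaussian {p : ℕ} (m : Fin p → ℝ) {S : Matrix (Fin p) (Fin p) ℝ}
    (hS : S.PosSemidef) : Measure (Fin p → ℝ) :=
  (Measure.pi fun _ : Fin p => gaussianReal 0 1).map fun w => m + ((hS.1.eigenvectorUnitary : Matrix (Fin p) (Fin p) ℝ) *
    diagonal (fun i => Real.sqrt (hS.1.eigenvalues i)) *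
    (star hS.1.eigenvectorUnitary : Matrix (Fin p) (Fin p) ℝ)).mulVec w

noncomputable abbrev sqM {p : ℕ} {S : Matrix (Fin p) (Fin p) ℝ} (hS : S.PosSemidef) :
    Matrix (Fin p) (Fin p) ℝ :=
  (hS.1.eigenvectorUnitary : Matrix (Fin p) (Fin p) ℝ) *
    diagonal (fun i => Real.sqrt (hS.1.eigenvalues i)) *
    (star hS.1.eigenvectorUnitary : Matrix (Fin p) (Fin p) ℝ)

lemma mvGaussian_eq {p : ℕ} (m : Fin p → ℝ) {S : Matrix (Fin p) (Fin p) ℝ}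
    (hS : S.PosSemidef) : mvGaussian m hS
      = (Measure.pi fun _ : Fin p => gaussianReal 0 1).map fun w => m + (sqM hS).mulVec w :=
  rfl

lemma sqM_transpose {p : ℕ} {S : Matrix (Fin p) (Fin p) ℝ} (hS : S.PosSemidef) :
    (sqM hS)ᵀ = sqM hS := by
  rw [← Matrix.conjTranspose_eq_transpose_of_trivial]
  simp [sqM, Matrix.star_eq_conjTranspose, Matrix.mul_assoc]

lemma sqM_mul_self {p : ℕ} {S : Matrix (Fin p) (Fin p) ℝ} (hS : S.PosSemidef) :
    sqM hS * sqM hS = S := by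
  have hU : (star hS.1.eigenvectorUnitary : Matrix (Fin p) (Fin p) ℝ) *
      (hS.1.eigenvectorUnitary : Matrix (Fin p) (Fin p) ℝ) = 1 :=
    Unitary.coe_star_mul_self _
  conv_rhs => rw [hS.1.spectral_theorem, Unitary.conjStarAlgAut_apply]
  simp only [sqM]
  rw [show ∀ A B C D E F : Matrix (Fin p) (Fin p) ℝ, A * B * C * (D * E * F)
      = A * (B * (C * D) * E) * F from by intros; simp only [Matrix.mul_assoc]]
  rw [hU, Matrix.mul_one, diagonal_mul_diagonal]
  congr 3; funext i; simp [Real.mul_self_sqrt (hS.eigenvalues_nonneg i)]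

section MV

variable {p : ℕ} {S : Matrix (Fin p) (Fin p) ℝ} (hS : S.PosSemidef) (mk m u : Fin p → ℝ)

lemma mulVec_continuous (A : Matrix (Fin p) (Fin p) ℝ) :
    Continuous (fun w : Fin p → ℝ => A *ᵥ w) := by
  have h1 : (fun w : Fin p → ℝ => A *ᵥ w) = ⇑(A.mulVecLin) := by
    funext w; simp [Matrix.mulVecLin_apply]
  rw [h1]
  exact LinearMap.continuous_of_finiteDimensional _

lemma mvT_measurable : Measurable (fun w : Fin p → ℝ => mk + (sqM hS) *ᵥ w) :=
  (continuous_const.add (mulVec_continuous (sqM hS))).measurable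

lemma proj_continuous (k : ℕ) :
    Continuous (fun z : Fin p → ℝ => (u ⬝ᵥ (z - m)) ^ k) := by
  apply Continuous.pow
  simp only [dotProduct]
  exact continuous_finset_sum _ fun i _ =>
    continuous_const.mul ((continuous_apply i).sub continuous_const)

lemma mv_shift (w : Fin p → ℝ) :
    u ⬝ᵥ ((mk + (sqM hS) *ᵥ w) - m) = u ⬝ᵥ (mk - m) + (u ᵥ* (sqM hS)) ⬝ᵥ w := by
  rw [show mk + (sqM hS) *ᵥ w - m = (mk - m) + (sqM hS) *ᵥ w from by abel,
    dotProduct_add, dotProduct_mulVec]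

lemma mv_moment (k : ℕ) :
    ∫ z, (u ⬝ᵥ (z - m)) ^ k ∂(mvGaussian mk hS)
      = ∫ w, (u ⬝ᵥ (mk - m) + (u ᵥ* (sqM hS)) ⬝ᵥ w) ^ k
          ∂(Measure.pi fun _ => gaussianReal 0 1) := by
  rw [mvGaussian_eq, integral_map (mvT_measurable hS mk).aemeasurable
    (proj_continuous m u k).aestronglyMeasurable]
  congr 1; funext w
  rw [mv_shift]

lemma mv_moment_integrable_sq :
    Integrable (fun z => (u ⬝ᵥ (z - m)) ^ 2) (mvGaussian mk hS) := by
  rw [mvGaussian_eq, integrable_map_measure (proj_continuous m u 2).aestronglyMeasurable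
    (mvT_measurable hS mk).aemeasurable]
  have := shift_sq_integrable (u ᵥ* (sqM hS)) (u ⬝ᵥ (mk - m))
  apply this.congr
  filter_upwards with w
  rw [Function.comp_apply, mv_shift]

lemma mv_moment_integrable_cube :
    Integrable (fun z => (u ⬝ᵥ (z - m)) ^ 3) (mvGaussian mk hS) := by
  rw [mvGaussian_eq, integrable_map_measure (proj_continuous m u 3).aestronglyMeasurable
    (mvT_measurable hS mk).aemeasurable]
  have := shift_cube_integrable (u ᵥ* (sqM hS)) (u ⬝ᵥ (mk - m))
  apply this.congr
  filter_upwards with w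
  rw [Function.comp_apply, mv_shift]

lemma mv_sq_integral :
    ∫ z, (u ⬝ᵥ (z - m)) ^ 2 ∂(mvGaussian mk hS)
      = (u ⬝ᵥ (mk - m)) ^ 2 + u ⬝ᵥ (S *ᵥ u) := by
  rw [mv_moment, shift_sq_integral]
  congr 1
  -- (u ᵥ* A) ⬝ᵥ (u ᵥ* A) = u ⬝ᵥ (S *ᵥ u)
  have hAsymm : (sqM hS).transpose = (sqM hS) := by
    exact sqM_transpose hS
  calc (u ᵥ* (sqM hS)) ⬝ᵥ (u ᵥ* (sqM hS))
      = (u ᵥ* (sqM hS)) ⬝ᵥ ((sqM hS).transpose *ᵥ u) := by rw [Matrix.mulVec_transpose]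
    _ = ((u ᵥ* (sqM hS)) ᵥ* (sqM hS).transpose) ⬝ᵥ u := by rw [dotProduct_mulVec]
    _ = (u ᵥ* ((sqM hS) * (sqM hS).transpose)) ⬝ᵥ u := by rw [Matrix.vecMul_vecMul]
    _ = (u ᵥ* S) ⬝ᵥ u := by rw [hAsymm, sqM_mul_self hS]
    _ = u ⬝ᵥ (S *ᵥ u) := (dotProduct_mulVec u S u).symm

lemma mv_cube_integral :
    ∫ z, (u ⬝ᵥ (z - m)) ^ 3 ∂(mvGaussian mk hS)
      = (u ⬝ᵥ (mk - m)) ^ 3 + 3 * (u ⬝ᵥ (mk - m)) * (u ⬝ᵥ (S *ᵥ u)) := by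
  rw [mv_moment, shift_cube_integral]
  congr 2
  have h := mv_sq_integral hS mk m u
  rw [mv_moment, shift_sq_integral] at h
  linarith [h]

lemma mv_id_integrable : Integrable (fun z : Fin p → ℝ => z) (mvGaussian mk hS) := by
  rw [mvGaussian_eq, integrable_map_measure
    (continuous_id'.aestronglyMeasurable)
    (mvT_measurable hS mk).aemeasurable]
  have hlin : Integrable (fun w : Fin p → ℝ => ∑ j, w j • (fun i => (sqM hS) i j))
      (Measure.pi fun _ => gaussianReal 0 1) :=
    integrable_finset_sum _ fun j _ => (eval_integrable j).smul_const _
  have : Integrable (fun w : Fin p → ℝ => mk + ∑ j, w j • (fun i => (sqM hS) i j))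
      (Measure.pi fun _ => gaussianReal 0 1) := (integrable_const mk).add hlin
  apply this.congr
  filter_upwards with w
  rw [Function.comp_apply]
  show mk + ∑ j, w j • (fun i => (sqM hS) i j) = mk + (sqM hS) *ᵥ w
  congr 1
  funext i
  rw [Finset.sum_apply]
  simp only [Pi.smul_apply, smul_eq_mul]
  rw [Matrix.mulVec, dotProduct]
  exact Finset.sum_congr rfl fun j _ => by ring

lemma mv_mean : ∫ z, z ∂(mvGaussian mk hS) = mk := by
  rw [mvGaussian_eq, integral_map (mvT_measurable hS mk).aemeasurable
    continuous_id'.aestronglyMeasurable]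
  have hlin : Integrable (fun w : Fin p → ℝ => (sqM hS) *ᵥ w)
      (Measure.pi fun _ => gaussianReal 0 1) := by
    have hlin' : Integrable (fun w : Fin p → ℝ => ∑ j, w j • (fun i => (sqM hS) i j))
        (Measure.pi fun _ => gaussianReal 0 1) :=
      integrable_finset_sum _ fun j _ => (eval_integrable j).smul_const _
    apply hlin'.congr
    filter_upwards with w
    funext i
    rw [Finset.sum_apply]
    simp only [Pi.smul_apply, smul_eq_mul]
    rw [Matrix.mulVec, dotProduct]
    exact Finset.sum_congr rfl fun j _ => by ring
  rw [integral_add (integrable_const mk) hlin, integral_const]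
  have hodd : ∫ w, (sqM hS) *ᵥ w ∂(Measure.pi fun _ => gaussianReal 0 1) = 0 :=
    integral_odd_eq_zero _ pi_neg_invariant (fun w => Matrix.mulVec_neg w (sqM hS))
  rw [hodd]
  simp

end MV

lemma mix_integral {E : Type*} [MeasurableSpace E] {F : Type*} [NormedAddCommGroup F]
    [NormedSpace ℝ F] (a1 a2 : ℝ) (h1 : 0 ≤ a1) (h2 : 0 ≤ a2) (ν1 ν2 : Measure E)
    (g : E → F) (hg1 : Integrable g ν1) (hg2 : Integrable g ν2) :
    ∫ z, g z ∂(ENNReal.ofReal a1 • ν1 + ENNReal.ofReal a2 • ν2)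
      = a1 • ∫ z, g z ∂ν1 + a2 • ∫ z, g z ∂ν2 := by
  rw [integral_add_measure (hg1.smul_measure ENNReal.ofReal_ne_top)
    (hg2.smul_measure ENNReal.ofReal_ne_top),
    integral_smul_measure, integral_smul_measure,
    ENNReal.toReal_ofReal h1, ENNReal.toReal_ofReal h2]

section CSsec

variable {p : ℕ} {S : Matrix (Fin p) (Fin p) ℝ}

lemma S_symm (hS : S.PosDef) (x y : Fin p → ℝ) : x ⬝ᵥ (S *ᵥ y) = y ⬝ᵥ (S *ᵥ x) := by
  have hT : Sᵀ = S := by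
    rw [← Matrix.conjTranspose_eq_transpose_of_trivial]; exact hS.isHermitian
  rw [dotProduct_mulVec x S y, ← Matrix.mulVec_transpose, hT, dotProduct_comm]

lemma q_pos (hS : S.PosDef) (x : Fin p → ℝ) (hx : x ≠ 0) : 0 < x ⬝ᵥ (S *ᵥ x) := by
  have := hS.dotProduct_mulVec_pos hx
  simpa using this

lemma q_nonneg (hS : S.PosDef) (x : Fin p → ℝ) : 0 ≤ x ⬝ᵥ (S *ᵥ x) := by
  have := hS.posSemidef.dotProduct_mulVec_nonneg x
  simpa using this

lemma q_eq_zero (hS : S.PosDef) (x : Fin p → ℝ) (h : x ⬝ᵥ (S *ᵥ x) = 0) : x = 0 := by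
  by_contra hx; exact (q_pos hS x hx).ne' h

lemma cs_expand (hS : S.PosDef) (x y : Fin p → ℝ) :
    ((y ⬝ᵥ (S *ᵥ y)) • x - (x ⬝ᵥ (S *ᵥ y)) • y) ⬝ᵥ
        (S *ᵥ ((y ⬝ᵥ (S *ᵥ y)) • x - (x ⬝ᵥ (S *ᵥ y)) • y))
      = (y ⬝ᵥ (S *ᵥ y)) * ((x ⬝ᵥ (S *ᵥ x)) * (y ⬝ᵥ (S *ᵥ y)) - (x ⬝ᵥ (S *ᵥ y)) ^ 2) := by
  rw [Matrix.mulVec_sub, Matrix.mulVec_smul, Matrix.mulVec_smul,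
    sub_dotProduct, smul_dotProduct, smul_dotProduct,
    dotProduct_sub, dotProduct_sub, dotProduct_smul, dotProduct_smul,
    dotProduct_smul, dotProduct_smul, S_symm hS y x]
  simp only [smul_eq_mul]
  ring

lemma cs_ineq (hS : S.PosDef) (x y : Fin p → ℝ) :
    (x ⬝ᵥ (S *ᵥ y)) ^ 2 ≤ (x ⬝ᵥ (S *ᵥ x)) * (y ⬝ᵥ (S *ᵥ y)) := by
  rcases eq_or_ne y 0 with rfl | hy
  · simp
  · have h1 := q_nonneg hS ((y ⬝ᵥ (S *ᵥ y)) • x - (x ⬝ᵥ (S *ᵥ y)) • y)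
    rw [cs_expand hS] at h1
    have h2 := q_pos hS y hy
    nlinarith [h1, h2]

lemma cs_eq_case (hS : S.PosDef) (x y : Fin p → ℝ) (hy : y ≠ 0)
    (h : (x ⬝ᵥ (S *ᵥ y)) ^ 2 = (x ⬝ᵥ (S *ᵥ x)) * (y ⬝ᵥ (S *ᵥ y))) :
    x = ((x ⬝ᵥ (S *ᵥ y)) / (y ⬝ᵥ (S *ᵥ y))) • y := by
  have h2 := q_pos hS y hy
  have h1 : ((y ⬝ᵥ (S *ᵥ y)) • x - (x ⬝ᵥ (S *ᵥ y)) • y) ⬝ᵥ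
      (S *ᵥ ((y ⬝ᵥ (S *ᵥ y)) • x - (x ⬝ᵥ (S *ᵥ y)) • y)) = 0 := by
    rw [cs_expand hS, h]; ring
  have h3 := q_eq_zero hS _ h1
  have h4 : (y ⬝ᵥ (S *ᵥ y)) • x = (x ⬝ᵥ (S *ᵥ y)) • y := by rwa [sub_eq_zero] at h3
  calc x = ((y ⬝ᵥ (S *ᵥ y))⁻¹ * (y ⬝ᵥ (S *ᵥ y))) • x := by
        rw [inv_mul_cancel₀ h2.ne', one_smul]
    _ = (y ⬝ᵥ (S *ᵥ y))⁻¹ • ((y ⬝ᵥ (S *ᵥ y)) • x) := by rw [smul_smul]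
    _ = (y ⬝ᵥ (S *ᵥ y))⁻¹ • ((x ⬝ᵥ (S *ᵥ y)) • y) := by rw [h4]
    _ = ((x ⬝ᵥ (S *ᵥ y)) / (y ⬝ᵥ (S *ᵥ y))) • y := by
        rw [smul_smul, div_eq_inv_mul]

end CSsec

lemma rpow_32_sq (x : ℝ) (hx : 0 ≤ x) : (x ^ ((3 : ℝ) / 2)) ^ 2 = x ^ 3 := by
  rw [← Real.rpow_natCast (x ^ ((3 : ℝ) / 2)) 2, ← Real.rpow_mul hx]
  norm_num

lemma cube_inj {x y : ℝ} (hx : 0 ≤ x) (hy : 0 ≤ y) (h : x ^ 3 = y ^ 3) : x = y := by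
  rcases lt_trichotomy x y with hlt | heq | hgt
  · exact absurd h (pow_lt_pow_left₀ hlt hx (by norm_num)).ne
  · exact heq
  · exact absurd h.symm (pow_lt_pow_left₀ hgt hy (by norm_num)).ne

lemma core_lemma (K c R q δ : ℝ) (hK : 0 < K) (hc : 0 < c) (hR : 0 < R) (hq : 0 < q)
    (hCS : δ ^ 2 ≤ q * R) :
    K * δ ^ 6 / (q + c * δ ^ 2) ^ 3 ≤ K * R ^ 6 / (R + c * R ^ 2) ^ 3 ∧
      (K * δ ^ 6 / (q + c * δ ^ 2) ^ 3 = K * R ^ 6 / (R + c * R ^ 2) ^ 3 ↔ δ ^ 2 = q * R) := by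
  have hDU : (0 : ℝ) < q + c * δ ^ 2 := by positivity
  have hDR : (0 : ℝ) < R + c * R ^ 2 := by positivity
  have hXnn : 0 ≤ δ ^ 2 / (q + c * δ ^ 2) := by positivity
  have hYnn : 0 ≤ R ^ 2 / (R + c * R ^ 2) := by positivity
  have hrw1 : K * δ ^ 6 / (q + c * δ ^ 2) ^ 3 = K * (δ ^ 2 / (q + c * δ ^ 2)) ^ 3 := by
    rw [div_pow]; ring
  have hrw2 : K * R ^ 6 / (R + c * R ^ 2) ^ 3 = K * (R ^ 2 / (R + c * R ^ 2)) ^ 3 := by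
    rw [div_pow]; ring
  have hXY : δ ^ 2 / (q + c * δ ^ 2) ≤ R ^ 2 / (R + c * R ^ 2) := by
    rw [div_le_div_iff₀ hDU hDR]
    nlinarith [mul_le_mul_of_nonneg_right hCS hR.le]
  refine ⟨?_, ?_, ?_⟩
  · rw [hrw1, hrw2]
    exact mul_le_mul_of_nonneg_left (pow_le_pow_left₀ hXnn hXY 3) hK.le
  · intro h
    rw [hrw1, hrw2] at h
    have h3 := mul_left_cancel₀ hK.ne' h
    have hXYeq := cube_inj hXnn hYnn h3
    rw [div_eq_div_iff hDU.ne' hDR.ne'] at hXYeq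
    have h5 : δ ^ 2 * R = q * R * R := by linear_combination hXYeq
    exact mul_right_cancel₀ hR.ne' h5
  · intro h
    rw [hrw1, hrw2]
    have h6 : δ ^ 2 / (q + c * δ ^ 2) = R ^ 2 / (R + c * R ^ 2) := by
      rw [div_eq_div_iff hDU.ne' hDR.ne']
      linear_combination R * h
    rw [h6]

/-- under the two-component Gaussian mixture, if `α₁ ≠ 1/2` the squared
skewness of projections is uniquely maximized at `± θ/‖θ‖` with `θ = Σ⁻¹(μ₂ − μ₁)`;
if `α₁ = 1/2` the squared skewness of every projection vanishes. -/
theorem stmt_16 (p : ℕ) (a1 a2 : ℝ) (ha1 : 0 < a1) (ha2 : 0 < a2) (hsum : a1 + a2 = 1)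
    (m1 m2 : Fin p → ℝ) (hm : m1 ≠ m2)
    (S : Matrix (Fin p) (Fin p) ℝ) (hS : S.PosDef) :
    let μ := ENNReal.ofReal a1 • mvGaussian m1 hS.posSemidef
        + ENNReal.ofReal a2 • mvGaussian m2 hS.posSemidef
    let m := ∫ z, z ∂μ
    let γ := fun u : Fin p → ℝ =>
      (∫ z, (u ⬝ᵥ (z - m)) ^ 3 ∂μ) / (∫ z, (u ⬝ᵥ (z - m)) ^ 2 ∂μ) ^ ((3 : ℝ) / 2)
    let θ := S⁻¹.mulVec (m2 - m1)
    let θn := (Real.sqrt (∑ i, θ i ^ 2))⁻¹ • θ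
    (a1 ≠ 1 / 2 →
      ∀ u : Fin p → ℝ, (∑ i, u i ^ 2) = 1 →
        γ u ^ 2 ≤ γ θn ^ 2 ∧ (γ u ^ 2 = γ θn ^ 2 ↔ u = θn ∨ u = -θn)) ∧
    (a1 = 1 / 2 → ∀ u : Fin p → ℝ, (∑ i, u i ^ 2) = 1 → γ u ^ 2 = 0) := by
  intro μ m γ θ θn
  have hμdef : μ = ENNReal.ofReal a1 • mvGaussian m1 hS.posSemidef
      + ENNReal.ofReal a2 • mvGaussian m2 hS.posSemidef := rfl
  have hγdef : ∀ u : Fin p → ℝ, γ u = (∫ z, (u ⬝ᵥ (z - m)) ^ 3 ∂μ)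
      / (∫ z, (u ⬝ᵥ (z - m)) ^ 2 ∂μ) ^ ((3 : ℝ) / 2) := fun u => rfl
  have hθn_def : θn = (Real.sqrt (∑ i, θ i ^ 2))⁻¹ • θ := rfl
  have hmean : m = a1 • m1 + a2 • m2 := by
    show (∫ z, z ∂μ) = _
    rw [hμdef, mix_integral a1 a2 ha1.le ha2.le _ _ _
      (mv_id_integrable hS.posSemidef m1) (mv_id_integrable hS.posSemidef m2),
      mv_mean, mv_mean]
  have hc1 : ∀ u : Fin p → ℝ, u ⬝ᵥ (m1 - m) = -(a2 * (u ⬝ᵥ (m2 - m1))) := by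
    intro u
    have e1 : m1 - m = (-a2) • (m2 - m1) := by
      rw [hmean]; funext i
      simp only [Pi.sub_apply, Pi.add_apply, Pi.smul_apply, Pi.neg_apply, smul_eq_mul]
      linear_combination (-(m1 i)) * hsum
    rw [e1, dotProduct_smul, smul_eq_mul]; ring
  have hc2 : ∀ u : Fin p → ℝ, u ⬝ᵥ (m2 - m) = a1 * (u ⬝ᵥ (m2 - m1)) := by
    intro u
    have e1 : m2 - m = a1 • (m2 - m1) := by
      rw [hmean]; funext i
      simp only [Pi.sub_apply, Pi.add_apply, Pi.smul_apply, smul_eq_mul]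
      linear_combination (-(m2 i)) * hsum
    rw [e1, dotProduct_smul, smul_eq_mul]
  have hM3 : ∀ u : Fin p → ℝ, ∫ z, (u ⬝ᵥ (z - m)) ^ 3 ∂μ
      = a1 * a2 * (a1 - a2) * (u ⬝ᵥ (m2 - m1)) ^ 3 := by
    intro u
    rw [hμdef, mix_integral a1 a2 ha1.le ha2.le _ _ _
      (mv_moment_integrable_cube hS.posSemidef m1 m u)
      (mv_moment_integrable_cube hS.posSemidef m2 m u),
      mv_cube_integral, mv_cube_integral, hc1 u, hc2 u, smul_eq_mul, smul_eq_mul]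
    linear_combination (a1 * a2 * (a1 - a2) * (u ⬝ᵥ (m2 - m1)) ^ 3) * hsum
  have hM2 : ∀ u : Fin p → ℝ, ∫ z, (u ⬝ᵥ (z - m)) ^ 2 ∂μ
      = u ⬝ᵥ (S *ᵥ u) + a1 * a2 * (u ⬝ᵥ (m2 - m1)) ^ 2 := by
    intro u
    rw [hμdef, mix_integral a1 a2 ha1.le ha2.le _ _ _
      (mv_moment_integrable_sq hS.posSemidef m1 m u)
      (mv_moment_integrable_sq hS.posSemidef m2 m u),
      mv_sq_integral, mv_sq_integral, hc1 u, hc2 u, smul_eq_mul, smul_eq_mul]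
    linear_combination (u ⬝ᵥ (S *ᵥ u) + a1 * a2 * (u ⬝ᵥ (m2 - m1)) ^ 2) * hsum
  have hγsq : ∀ w : Fin p → ℝ, γ w ^ 2
      = (a1 * a2 * (a1 - a2)) ^ 2 * (w ⬝ᵥ (m2 - m1)) ^ 6
        / (w ⬝ᵥ (S *ᵥ w) + a1 * a2 * (w ⬝ᵥ (m2 - m1)) ^ 2) ^ 3 := by
    intro w
    have hM2nn : 0 ≤ w ⬝ᵥ (S *ᵥ w) + a1 * a2 * (w ⬝ᵥ (m2 - m1)) ^ 2 := by
      exact add_nonneg (q_nonneg hS w)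
        (mul_nonneg (mul_nonneg ha1.le ha2.le) (sq_nonneg _))
    rw [hγdef w, div_pow, hM3 w, hM2 w, rpow_32_sq _ hM2nn]
    congr 1
    ring
  -- geometry facts
  have hdet : IsUnit S.det := isUnit_iff_ne_zero.mpr hS.det_pos.ne'
  have hSθ : S *ᵥ θ = m2 - m1 := by
    show S *ᵥ (S⁻¹ *ᵥ (m2 - m1)) = m2 - m1
    rw [Matrix.mulVec_mulVec, Matrix.mul_nonsing_inv _ hdet, Matrix.one_mulVec]
  have hd : m2 - m1 ≠ 0 := sub_ne_zero_of_ne (Ne.symm hm)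
  have hθ0 : θ ≠ 0 := by
    intro h; apply hd; rw [← hSθ, h, Matrix.mulVec_zero]
  have hR : 0 < θ ⬝ᵥ (m2 - m1) := by
    have := q_pos hS θ hθ0
    rwa [hSθ] at this
  have hexi : ∃ i, θ i ≠ 0 := by
    by_contra h; push_neg at h; exact hθ0 (funext h)
  have hnθ2 : 0 < ∑ i, θ i ^ 2 := by
    obtain ⟨i, hi⟩ := hexi
    have h1 : θ i ^ 2 ≠ 0 := pow_ne_zero 2 hi
    exact Finset.sum_pos' (fun j _ => sq_nonneg _)
      ⟨i, Finset.mem_univ i, lt_of_le_of_ne (sq_nonneg _) (Ne.symm h1)⟩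
  have ht : 0 < (Real.sqrt (∑ i, θ i ^ 2))⁻¹ :=
    inv_pos.mpr (Real.sqrt_pos.mpr hnθ2)
  have ht2 : ((Real.sqrt (∑ i, θ i ^ 2))⁻¹) ^ 2 * (∑ i, θ i ^ 2) = 1 := by
    rw [inv_pow, Real.sq_sqrt hnθ2.le]
    exact inv_mul_cancel₀ hnθ2.ne'
  have hθn0 : θn ≠ 0 := by
    rw [hθn_def]; exact smul_ne_zero ht.ne' hθ0
  have hδθn : θn ⬝ᵥ (m2 - m1) = (Real.sqrt (∑ i, θ i ^ 2))⁻¹ * (θ ⬝ᵥ (m2 - m1)) := by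
    rw [hθn_def, smul_dotProduct, smul_eq_mul]
  have hqθn : θn ⬝ᵥ (S *ᵥ θn)
      = ((Real.sqrt (∑ i, θ i ^ 2))⁻¹) ^ 2 * (θ ⬝ᵥ (m2 - m1)) := by
    rw [hθn_def, smul_dotProduct, Matrix.mulVec_smul, dotProduct_smul, hSθ]
    simp only [smul_eq_mul]; ring
  constructor
  · -- a1 ≠ 1/2 case
    intro h12 u hu
    have hne : a1 - a2 ≠ 0 := by
      intro h'; apply h12; linarith
    have hKne : a1 * a2 * (a1 - a2) ≠ 0 :=
      mul_ne_zero (mul_ne_zero ha1.ne' ha2.ne') hne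
    have hK : 0 < (a1 * a2 * (a1 - a2)) ^ 2 :=
      lt_of_le_of_ne (sq_nonneg _) (Ne.symm (pow_ne_zero 2 hKne))
    have hc : 0 < a1 * a2 := mul_pos ha1 ha2
    have hu0 : u ≠ 0 := by
      intro h; rw [h] at hu; simp at hu
    have hq : 0 < u ⬝ᵥ (S *ᵥ u) := q_pos hS u hu0
    have hCS : (u ⬝ᵥ (m2 - m1)) ^ 2 ≤ (u ⬝ᵥ (S *ᵥ u)) * (θ ⬝ᵥ (m2 - m1)) := by
      have := cs_ineq hS u θ
      rwa [hSθ] at this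
    have hγθn : γ θn ^ 2 = (a1 * a2 * (a1 - a2)) ^ 2 * (θ ⬝ᵥ (m2 - m1)) ^ 6
        / ((θ ⬝ᵥ (m2 - m1)) + a1 * a2 * (θ ⬝ᵥ (m2 - m1)) ^ 2) ^ 3 := by
      rw [hγsq θn, hδθn, hqθn]
      rw [div_eq_div_iff (by positivity) (by positivity)]
      ring
    obtain ⟨hle, hiff⟩ := core_lemma ((a1 * a2 * (a1 - a2)) ^ 2) (a1 * a2)
      (θ ⬝ᵥ (m2 - m1)) (u ⬝ᵥ (S *ᵥ u)) (u ⬝ᵥ (m2 - m1)) hK hc hR hq hCS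
    constructor
    · rw [hγsq u, hγθn]
      exact hle
    constructor
    · -- equality implies u = ± θn
      intro heq
      rw [hγsq u, hγθn] at heq
      have heq' := hiff.mp heq
      have hcs_eq : (u ⬝ᵥ (S *ᵥ θ)) ^ 2 = (u ⬝ᵥ (S *ᵥ u)) * (θ ⬝ᵥ (S *ᵥ θ)) := by
        rw [hSθ]; exact heq'
      have hu_eq := cs_eq_case hS u θ hθ0 hcs_eq
      set s : ℝ := (u ⬝ᵥ (S *ᵥ θ)) / (θ ⬝ᵥ (S *ᵥ θ)) with hsdef
      have hnorm : s ^ 2 * (∑ i, θ i ^ 2) = 1 := by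
        have h1 : (∑ i, (s • θ) i ^ 2) = s ^ 2 * ∑ i, θ i ^ 2 := by
          rw [Finset.mul_sum]
          exact Finset.sum_congr rfl fun i _ => by
            simp only [Pi.smul_apply, smul_eq_mul]; ring
        rw [← h1, ← hu_eq, hu]
      have hs2 : s ^ 2 = ((Real.sqrt (∑ i, θ i ^ 2))⁻¹) ^ 2 := by
        have := ht2
        have h2 : s ^ 2 * (∑ i, θ i ^ 2)
            = ((Real.sqrt (∑ i, θ i ^ 2))⁻¹) ^ 2 * (∑ i, θ i ^ 2) := by
          rw [hnorm, ht2]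
        exact mul_right_cancel₀ hnθ2.ne' h2
      have hfac : (s - (Real.sqrt (∑ i, θ i ^ 2))⁻¹) * (s + (Real.sqrt (∑ i, θ i ^ 2))⁻¹)
          = 0 := by linear_combination hs2
      rcases mul_eq_zero.mp hfac with h | h
      · left
        rw [hu_eq, hθn_def]
        have : s = (Real.sqrt (∑ i, θ i ^ 2))⁻¹ := by linarith [sub_eq_zero.mp h]
        rw [this]
      · right
        rw [hu_eq, hθn_def, ← neg_smul]
        have : s = -(Real.sqrt (∑ i, θ i ^ 2))⁻¹ := by linarith [add_eq_zero_iff_eq_neg.mp h]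
        rw [this]
    · -- u = ± θn implies equality
      intro h
      rcases h with h | h
      · rw [h]
      · rw [h, hγsq (-θn), hγsq θn]
        have e1 : (-θn) ⬝ᵥ (m2 - m1) = -(θn ⬝ᵥ (m2 - m1)) := neg_dotProduct _ _
        have e2 : (-θn) ⬝ᵥ (S *ᵥ (-θn)) = θn ⬝ᵥ (S *ᵥ θn) := by
          rw [Matrix.mulVec_neg, dotProduct_neg, neg_dotProduct, neg_neg]
        rw [e1, e2, Even.neg_pow (by decide : Even 6), Even.neg_pow (by decide : Even 2)]
  · -- a1 = 1/2 case
    intro h12 u hu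
    have ha2' : a2 = 1 / 2 := by linarith
    have hnum : a1 * a2 * (a1 - a2) = 0 := by rw [h12, ha2']; ring
    have hz : γ u = 0 := by
      rw [hγdef u, hM3 u, hnum, zero_mul, zero_div]
    rw [hz]
    exact zero_pow two_ne_zero
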